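/- Let u : ℂ → ℝ be a subharmonic (or more generally, continuous and satisfying the maximum principle) function on ℂ, and for L ∈ ℝ let D be a connected component of the sublevel set {ζ : u(ζ) < L}. Then D is simply connected. -/

import Mathlib

open Set Metric Bornology

/-- In a compact T2 space, a closed set disjoint from a connected component can be
separated from it by a clopen set. -/
lemma clopen_sep {X : Type*} [TopologicalSpace X] [T2Space X] [CompactSpace X]
    (x : X) (K : Set X) (hK : IsClosed K) (hd : Disjoint (connectedComponent x) K) :
    ∃ Z : Set X, IsClopen Z ∧ x ∈ Z ∧ Disjoint Z K := by
  by_contra hcon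
  push_neg at hcon
  have H1 := hK.isCompact.inter_iInter_nonempty
    (fun s : { s : Set X // IsClopen s ∧ x ∈ s } => s) (fun s => s.2.1.1)
    (fun t => by
      by_contra hemp
      rw [Set.not_nonempty_iff_eq_empty] at hemp
      refine absurd ?_ (hcon (⋂ s ∈ t, (s : Set X))
        (isClopen_biInter_finset fun s _ => s.2.1)
        (Set.mem_iInter₂.2 fun s _ => s.2.2))
      rw [Set.disjoint_iff_inter_eq_empty, Set.inter_comm]
      exact hemp)
  rw [← connectedComponent_eq_iInter_isClopen, Set.inter_comm] at H1
  exact absurd hd (Set.not_disjoint_iff_nonempty_inter.mpr H1)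

/-- If `u : ℂ → ℝ` is continuous and satisfies the maximum principle (as subharmonic
functions do), then every connected component `D` of a sublevel set `{ζ | u ζ < L}`
is simply connected, in the sense that no connected component of the complement of
`D` in `ℂ` is bounded. -/
theorem stmt0 (u : ℂ → ℝ) (hu : Continuous u)
    (hmax : ∀ V : Set ℂ, IsOpen V → Bornology.IsBounded V → ∀ z ∈ V,
      ∃ w ∈ frontier V, u z ≤ u w)
    (L : ℝ) (ζ₀ : ℂ) (h0 : u ζ₀ < L) (D : Set ℂ)
    (hD : D = connectedComponentIn {ζ : ℂ | u ζ < L} ζ₀) :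
    ∀ z ∉ D, ¬ Bornology.IsBounded (connectedComponentIn Dᶜ z) := by
  intro z hz hb
  set U : Set ℂ := {ζ : ℂ | u ζ < L} with hUdef
  have hUopen : IsOpen U := isOpen_lt hu continuous_const
  have hDopen : IsOpen D := hD ▸ hUopen.connectedComponentIn
  have hDU : D ⊆ U := hD ▸ connectedComponentIn_subset U ζ₀
  have hzc : z ∈ Dᶜ := hz
  set C := connectedComponentIn Dᶜ z with hCdef
  have hzC : z ∈ C := mem_connectedComponentIn hzc
  obtain ⟨r, hr0, hrC⟩ : ∃ r : ℝ, 0 < r ∧ C ⊆ ball 0 r := hb.subset_ball_lt 0 0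
  set F : Set ℂ := Dᶜ ∩ closedBall 0 (r + 1) with hFdef
  have hFc : IsCompact F :=
    (isCompact_closedBall (0:ℂ) (r+1)).inter_left (isClosed_compl_iff.mpr hDopen)
  have hballs : ball (0:ℂ) r ⊆ closedBall 0 (r+1) :=
    ball_subset_closedBall.trans (closedBall_subset_closedBall (by linarith))
  have hzF : z ∈ F := ⟨hzc, hballs (hrC hzC)⟩
  have hCF : C = connectedComponentIn F z := by
    apply Subset.antisymm
    · exact (isPreconnected_connectedComponentIn).subset_connectedComponentIn hzC
        (fun x hx => ⟨connectedComponentIn_subset _ _ hx, hballs (hrC hx)⟩)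
    · exact connectedComponentIn_mono z inter_subset_left
  haveI : CompactSpace F := isCompact_iff_compactSpace.mp hFc
  set p : F := ⟨z, hzF⟩ with hpdef
  have himg : (Subtype.val '' connectedComponent p : Set ℂ) = C := by
    rw [hCF, connectedComponentIn_eq_image hzF]
  -- separate the component from the outer part of F by a clopen set
  obtain ⟨Z, hZclopen, hpZ, hZdisj⟩ := clopen_sep p (Subtype.val ⁻¹' (ball (0:ℂ) r)ᶜ)
    ((isOpen_ball.isClosed_compl).preimage continuous_subtype_val)
    (by
      rw [Set.disjoint_left]
      intro q hq hq'
      exact hq' (hrC (himg ▸ mem_image_of_mem _ hq)))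
  set Z' : Set ℂ := Subtype.val '' Z with hZ'def
  set W : Set ℂ := Subtype.val '' Zᶜ with hWdef
  have hCZ' : C ⊆ Z' := by
    rw [← himg]
    exact image_mono (hZclopen.connectedComponent_subset hpZ)
  have hZ'ball : Z' ⊆ ball 0 r := by
    rintro a ⟨q, hq, rfl⟩
    by_contra hcon
    exact (Set.disjoint_left.mp hZdisj hq) hcon
  have hZ'c : IsCompact Z' := (hZclopen.isClosed.isCompact).image continuous_subtype_val
  have hWc : IsCompact W := (hZclopen.compl.isClosed.isCompact).image continuous_subtype_val
  have hZW : Disjoint Z' W := by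
    rw [Set.disjoint_left]
    rintro a ⟨q, hq, rfl⟩ ⟨q', hq', hqq⟩
    exact hq' (Subtype.val_injective hqq ▸ hq)
  have hWF : ∀ a ∈ F, a ∉ Z' → a ∈ W := fun a ha hna =>
    ⟨⟨a, ha⟩, fun hmem => hna ⟨⟨a, ha⟩, hmem, rfl⟩, rfl⟩
  obtain ⟨δ, hδ0, hδ⟩ := hZW.exists_thickenings hZ'c hWc.isClosed
  set ε := min δ 1 / 2 with hεdef
  have hε0 : 0 < ε := by positivity
  have hεδ : ε < δ := by
    rcases min_cases δ 1 with ⟨h1, _⟩ | ⟨h1, h2⟩ <;> rw [hεdef, h1] <;> linarith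
  have hε1 : ε < 1 := by
    have := min_le_right δ 1; rw [hεdef]; linarith
  set Ω : Set ℂ := {x : ℂ | infDist x Z' < ε} with hΩdef
  have hΩopen : IsOpen Ω := isOpen_lt (continuous_infDist_pt Z') continuous_const
  have hZ'ne : Z'.Nonempty := ⟨z, hCZ' hzC⟩
  have hZ'Ω : Z' ⊆ Ω := fun x hx => by
    simp only [hΩdef, mem_setOf_eq, infDist_zero_of_mem hx]; exact hε0
  have hnear : ∀ x : ℂ, infDist x Z' < 1 → x ∈ ball 0 (r + 1) := by
    intro x hx
    obtain ⟨y, hy, hxy⟩ := (infDist_lt_iff hZ'ne).mp hx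
    have hy' : dist y 0 < r := hZ'ball hy
    calc dist x 0 ≤ dist x y + dist y 0 := dist_triangle _ _ _
      _ < r + 1 := by linarith
  have hΩbdd : Bornology.IsBounded Ω :=
    isBounded_ball.subset (fun x hx => hnear x (lt_trans hx hε1))
  have hfr : ∀ w ∈ frontier Ω, w ∈ D := by
    intro w hw
    have hwe : infDist w Z' = ε :=
      frontier_lt_subset_eq (continuous_infDist_pt Z') continuous_const hw
    have hwZ' : w ∉ Z' := fun hmem => by
      rw [infDist_zero_of_mem hmem] at hwe; exact absurd hwe.symm hε0.ne'
    have hwW : w ∉ W := by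
      intro hmem
      have h1 : w ∈ thickening δ Z' :=
        (mem_thickening_iff_infDist_lt hZ'ne).mpr (hwe ▸ hεδ)
      exact Set.disjoint_left.mp hδ h1 (self_subset_thickening hδ0 W hmem)
    by_contra hwD
    exact hwW (hWF w ⟨hwD, ball_subset_closedBall (hnear w (hwe ▸ hε1))⟩ hwZ')
  have hΩU : Ω ⊆ U := by
    intro y hy
    obtain ⟨w, hw, hle⟩ := hmax Ω hΩopen hΩbdd y hy
    exact lt_of_le_of_lt hle (hDU (hfr w hw))
  have hCU : C ⊆ U := (hCZ'.trans hZ'Ω).trans hΩU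
  -- C is closed, nonempty and not all of ℂ, so it has a frontier point
  have hCclosed : IsClosed C := by
    rw [← himg]
    exact (isClosed_connectedComponent.isCompact.image continuous_subtype_val).isClosed
  obtain ⟨x, hx⟩ : (frontier C).Nonempty := by
    rw [Set.nonempty_iff_ne_empty]
    intro hemp
    rcases (isClopen_iff.mp (isClopen_iff_frontier_eq_empty.mpr hemp)) with h | h
    · exact (h ▸ hzC : z ∈ (∅ : Set ℂ))
    · have : (r : ℂ) ∈ ball (0:ℂ) r := hrC (h ▸ Set.mem_univ _)
      rw [mem_ball, dist_zero_right, Complex.norm_real, Real.norm_eq_abs,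
        abs_of_pos hr0] at this
      exact lt_irrefl r this
  have hxC : x ∈ C := hCclosed.frontier_subset hx
  -- x is on the frontier of D
  have hxclD : x ∈ closure D := by
    by_contra hcon
    obtain ⟨ρ, hρ0, hρ⟩ := Metric.isOpen_iff.mp isClosed_closure.isOpen_compl x hcon
    have hballC : ball x ρ ⊆ C := by
      have h1 : ball x ρ ⊆ Dᶜ := fun y hy => fun hyD => hρ hy (subset_closure hyD)
      have h2 : ball x ρ ⊆ connectedComponentIn Dᶜ x :=
        (convex_ball x ρ).isPreconnected.subset_connectedComponentIn (mem_ball_self hρ0) h1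
      calc ball x ρ ⊆ connectedComponentIn Dᶜ x := h2
        _ = C := (connectedComponentIn_eq hxC).symm
    exact hx.2 (mem_interior.mpr ⟨ball x ρ, hballC, isOpen_ball, mem_ball_self hρ0⟩)
  have hxU : x ∈ U := hCU hxC
  -- hence x lies in D, contradiction
  set E := connectedComponentIn U x with hEdef
  have hEopen : IsOpen E := hUopen.connectedComponentIn
  have hxE : x ∈ E := mem_connectedComponentIn hxU
  obtain ⟨y, hyE, hyD⟩ : (E ∩ D).Nonempty :=
    _root_.mem_closure_iff.mp hxclD E hEopen hxE
  have hED : E = D := by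
    have e2 := connectedComponentIn_eq (show y ∈ connectedComponentIn U ζ₀ from hD ▸ hyD)
    calc E = connectedComponentIn U y := connectedComponentIn_eq hyE
      _ = connectedComponentIn U ζ₀ := e2.symm
      _ = D := hD.symm
  exact (connectedComponentIn_subset Dᶜ z hxC) (hED ▸ hxE)
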